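/- For every n ≥ 1 and every ξ ∈ ℂ with |ξ − z₁| < ρ₁, one has (1/2)·(1/(2πi))·∮_{|ζ−z₁|=ρ₁} q₁,ₙ(ζ)/(ζ − ξ) dζ + (1/2)·conj( (1/(2πi))·∮_{|ζ−z₁|=ρ₁} conj(q₁,ₙ(ζ))/(ζ − ξ) dζ ) = (1/2)·κ₁,ₙ/(ξ − z₂,ₙ₋₁), where both circle integrals are taken counterclockwise. -/

import Mathlib

open Metric Real Complex

lemma aux_l_bounds (ρ ρ₁ ρ₂ : ℝ) (hρ₁ : 0 < ρ₁) (hρ₂ : 0 < ρ₂) (hsum : ρ₁ + ρ₂ < ρ)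
    (Λ₁ Λ₂ : ℝ) (hΛ₁ : Λ₁ = (ρ₁ / ρ) ^ 2) (hΛ₂ : Λ₂ = (ρ₂ / ρ) ^ 2)
    (l₁ l₂ : ℕ → ℝ) (hl₁0 : l₁ 0 = 1) (hl₂0 : l₂ 0 = 1)
    (hl₁ : ∀ n : ℕ, l₁ (n + 1) = 1 - Λ₂ / l₂ n)
    (hl₂ : ∀ n : ℕ, l₂ (n + 1) = 1 - Λ₁ / l₁ n) :
    ∀ n : ℕ, 1 - ρ₂ / ρ ≤ l₁ n ∧ 1 - ρ₁ / ρ ≤ l₂ n := by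
  have hρ : 0 < ρ := lt_trans (by linarith) hsum
  intro n
  induction n with
  | zero =>
    rw [hl₁0, hl₂0]
    constructor
    · nlinarith [div_pos hρ₂ hρ]
    · nlinarith [div_pos hρ₁ hρ]
  | succ n ih =>
    obtain ⟨ih1, ih2⟩ := ih
    have h1 : (0:ℝ) < 1 - ρ₂/ρ := by
      rw [sub_pos, div_lt_one hρ]; linarith
    have h2 : (0:ℝ) < 1 - ρ₁/ρ := by
      rw [sub_pos, div_lt_one hρ]; linarith
    have hl₂pos : 0 < l₂ n := lt_of_lt_of_le h2 ih2
    have hl₁pos : 0 < l₁ n := lt_of_lt_of_le h1 ih1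
    constructor
    · rw [hl₁ n]
      have : Λ₂ / l₂ n ≤ ρ₂ / ρ := by
        rw [div_le_iff₀ hl₂pos, hΛ₂]
        have h3 : ρ₂/ρ ≤ 1 - ρ₁/ρ := by
          rw [le_sub_iff_add_le, ← add_div, div_le_one hρ]; linarith
        nlinarith [div_pos hρ₂ hρ]
      linarith
    · rw [hl₂ n]
      have : Λ₁ / l₁ n ≤ ρ₁ / ρ := by
        rw [div_le_iff₀ hl₁pos, hΛ₁]
        have h3 : ρ₁/ρ ≤ 1 - ρ₂/ρ := by
          rw [le_sub_iff_add_le, ← add_div, div_le_one hρ]; linarith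
        nlinarith [div_pos hρ₁ hρ]
      linarith

lemma aux_two_poles {c a b : ℂ} {R : ℝ} (ha : a ∈ Metric.ball c R) (hb : b ∈ Metric.ball c R) :
    (∮ z in C(c, R), (z - a)⁻¹ * (z - b)⁻¹) = 0 := by
  have hR : 0 < R := lt_of_le_of_lt dist_nonneg ha
  rcases eq_or_ne a b with rfl | hab
  · have : (∮ z in C(c, R), (z - a)⁻¹ * (z - a)⁻¹) = ∮ z in C(c, R), (z - a) ^ (-2 : ℤ) := by
      refine circleIntegral.integral_congr hR.le fun z _ => ?_
      rw [zpow_neg, zpow_two, mul_inv]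
    rw [this, circleIntegral.integral_sub_zpow_of_ne (by decide) c a R]
  · have hane : ∀ z ∈ sphere c R, z - a ≠ 0 := fun z hz =>
      sub_ne_zero.2 (ne_of_mem_of_not_mem hz (Metric.mem_ball.1 ha).ne)
    have hbne : ∀ z ∈ sphere c R, z - b ≠ 0 := fun z hz =>
      sub_ne_zero.2 (ne_of_mem_of_not_mem hz (Metric.mem_ball.1 hb).ne)
    have key : (∮ z in C(c, R), (z - a)⁻¹ * (z - b)⁻¹)
        = ∮ z in C(c, R), (a - b)⁻¹ * ((z - a)⁻¹ - (z - b)⁻¹) := by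
      refine circleIntegral.integral_congr hR.le fun z hz => ?_
      have h1 := hane z hz; have h2 := hbne z hz
      have h3 : a - b ≠ 0 := sub_ne_zero.2 hab
      field_simp
      ring
    rw [key, circleIntegral.integral_const_mul]
    have hia : CircleIntegrable (fun z => (z - a)⁻¹) c R := by
      apply ContinuousOn.circleIntegrable hR.le
      exact (continuousOn_id.sub continuousOn_const).inv₀ (hane)
    have hib : CircleIntegrable (fun z => (z - b)⁻¹) c R := by
      apply ContinuousOn.circleIntegrable hR.le
      exact (continuousOn_id.sub continuousOn_const).inv₀ (hbne)
    rw [circleIntegral.integral_sub hia hib,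
      circleIntegral.integral_sub_inv_of_mem_ball ha,
      circleIntegral.integral_sub_inv_of_mem_ball hb, sub_self, mul_zero]

open Metric Real Complex

theorem double_layer_cauchy_identity
    (z₁ z₂ : ℂ) (hz : z₁ ≠ z₂) (ρ ρ₁ ρ₂ : ℝ)
    (hρ : ρ = ‖z₁ - z₂‖)
    (hρ₁ : 0 < ρ₁) (hρ₂ : 0 < ρ₂) (hsum : ρ₁ + ρ₂ < ρ)
    (Λ₁ Λ₂ Λ : ℝ) (hΛ₁ : Λ₁ = (ρ₁ / ρ) ^ 2) (hΛ₂ : Λ₂ = (ρ₂ / ρ) ^ 2)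
    (hΛ : Λ = (Λ₁ - Λ₂) ^ 2 + 1 - 2 * (Λ₁ + Λ₂))
    (l₁ l₂ : ℕ → ℝ) (hl₁0 : l₁ 0 = 1) (hl₂0 : l₂ 0 = 1)
    (hl₁ : ∀ n : ℕ, l₁ (n + 1) = 1 - Λ₂ / l₂ n)
    (hl₂ : ∀ n : ℕ, l₂ (n + 1) = 1 - Λ₁ / l₁ n)
    (κ₁ κ₂ : ℕ → ℂ)
    (hκ₁1 : κ₁ 1 = ((2 * ρ₂ ^ 2 : ℝ) : ℂ))
    (hκ₁2 : κ₁ 2 = -(2 * (((ρ₁ * ρ₂ : ℝ)) : ℂ) ^ 2) / (starRingEnd ℂ (z₂ - z₁)) ^ 2)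
    (hκ₁rec : ∀ n : ℕ, 1 ≤ n →
      κ₁ (n + 2) = ((Λ₁ * Λ₂ / (l₂ n * l₁ (n - 1)) ^ 2 : ℝ) : ℂ) * κ₁ n)
    (hκ₂1 : κ₂ 1 = ((2 * ρ₁ ^ 2 : ℝ) : ℂ))
    (hκ₂2 : κ₂ 2 = -(2 * (((ρ₁ * ρ₂ : ℝ)) : ℂ) ^ 2) / (starRingEnd ℂ (z₁ - z₂)) ^ 2)
    (hκ₂rec : ∀ n : ℕ, 1 ≤ n →
      κ₂ (n + 2) = ((Λ₁ * Λ₂ / (l₁ n * l₂ (n - 1)) ^ 2 : ℝ) : ℂ) * κ₂ n)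
    (z1s z2s : ℕ → ℂ)
    (hz1s : ∀ n : ℕ, z1s n = ((1 - l₂ n : ℝ) : ℂ) * z₂ + ((l₂ n : ℝ) : ℂ) * z₁)
    (hz2s : ∀ n : ℕ, z2s n = ((1 - l₁ n : ℝ) : ℂ) * z₁ + ((l₁ n : ℝ) : ℂ) * z₂)
    (α₁ : ℕ → ℂ)
    (hα₁ : ∀ n : ℕ, 1 ≤ n →
      α₁ n = -κ₁ n / (2 * ((l₁ (n - 1) : ℝ) : ℂ) * (z₁ - z₂)))
    (q₁ : ℕ → ℂ → ℂ)
    (hq₁0 : ∀ z : ℂ, q₁ 0 z = 2 * (z - z₁))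
    (hq₁ : ∀ n : ℕ, 1 ≤ n → ∀ z : ℂ, q₁ n z = κ₁ n / (z - z2s (n - 1)) + α₁ n)
    :
    ∀ n : ℕ, 1 ≤ n → ∀ ξ : ℂ, ‖ξ - z₁‖ < ρ₁ →
      (1 / 2) * ((1 / (2 * (Real.pi : ℂ) * Complex.I)) *
          ∮ ζ in C(z₁, ρ₁), q₁ n ζ / (ζ - ξ)) +
      (1 / 2) * starRingEnd ℂ ((1 / (2 * (Real.pi : ℂ) * Complex.I)) *
          ∮ ζ in C(z₁, ρ₁), starRingEnd ℂ (q₁ n ζ) / (ζ - ξ)) =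
      (1 / 2) * (κ₁ n / (ξ - z2s (n - 1))) := by
  intro n hn ξ hξ
  have hρpos : 0 < ρ := lt_trans (by linarith) hsum
  obtain ⟨L, hLdef⟩ : ∃ L : ℝ, L = l₁ (n - 1) := ⟨_, rfl⟩
  obtain ⟨w, hwdef⟩ : ∃ w : ℂ, w = z2s (n - 1) := ⟨_, rfl⟩
  obtain ⟨κ, hκdef⟩ : ∃ κ : ℂ, κ = κ₁ n := ⟨_, rfl⟩
  obtain ⟨α, hαdef⟩ : ∃ α : ℂ, α = α₁ n := ⟨_, rfl⟩
  rw [← hwdef, ← hκdef]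
  have hq₁' : ∀ z : ℂ, q₁ n z = κ / (z - w) + α := by
    intro z; rw [hq₁ n hn z, ← hwdef, ← hκdef, ← hαdef]
  -- bounds on L
  have hLlb : 1 - ρ₂ / ρ ≤ L := hLdef ▸
    (aux_l_bounds ρ ρ₁ ρ₂ hρ₁ hρ₂ hsum Λ₁ Λ₂ hΛ₁ hΛ₂ l₁ l₂ hl₁0 hl₂0 hl₁ hl₂ (n-1)).1
  have hLρ : ρ₁ < L * ρ := by
    have h1 : (1 - ρ₂ / ρ) * ρ ≤ L * ρ := mul_le_mul_of_nonneg_right hLlb hρpos.le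
    have h2 : (1 - ρ₂ / ρ) * ρ = ρ - ρ₂ := by field_simp
    linarith
  have hLpos : 0 < L := by nlinarith
  have hLne : (L : ℂ) ≠ 0 := Complex.ofReal_ne_zero.2 hLpos.ne'
  have hz' : z₁ - z₂ ≠ 0 := sub_ne_zero.2 hz
  -- w
  have hwz : w - z₁ = (L : ℂ) * (z₂ - z₁) := by
    rw [hwdef, hz2s, ← hLdef]; push_cast; ring
  have habs_w : ‖w - z₁‖ = L * ρ := by
    rw [hwz, norm_mul, Complex.norm_real, Real.norm_of_nonneg hLpos.le, norm_sub_rev, ← hρ]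
  have hwout : ∀ u ∈ Metric.closedBall z₁ ρ₁, u - w ≠ 0 := by
    intro u hu h
    have h2 : ‖u - z₁‖ ≤ ρ₁ := by
      rw [← Complex.dist_eq]; exact Metric.mem_closedBall.1 hu
    rw [sub_eq_zero] at h
    rw [h, habs_w] at h2
    linarith
  have hξball : ξ ∈ Metric.ball z₁ ρ₁ := by
    rw [Metric.mem_ball, Complex.dist_eq]; exact hξ
  -- c and ζ₀
  obtain ⟨c, hcdef⟩ : ∃ c : ℂ, c = (L : ℂ) * (starRingEnd ℂ) (z₁ - z₂) := ⟨_, rfl⟩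
  have hcne : c ≠ 0 := hcdef ▸ mul_ne_zero hLne ((map_ne_zero (starRingEnd ℂ)).2 hz')
  have habs_c : ‖c‖ = L * ρ := by
    rw [hcdef, norm_mul, Complex.norm_real, Real.norm_of_nonneg hLpos.le, Complex.norm_conj, hρ]
  obtain ⟨ζ₀, hζ₀def⟩ : ∃ ζ₀ : ℂ, ζ₀ = z₁ - ((ρ₁ : ℝ) : ℂ) ^ 2 / c := ⟨_, rfl⟩
  have hζ₀ball : ζ₀ ∈ Metric.ball z₁ ρ₁ := by
    rw [Metric.mem_ball, Complex.dist_eq, hζ₀def]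
    have h3 : z₁ - ((ρ₁ : ℝ) : ℂ) ^ 2 / c - z₁ = -(((ρ₁ : ℝ) : ℂ) ^ 2 / c) := by ring
    rw [h3, norm_neg, norm_div, norm_pow, Complex.norm_real,
      Real.norm_of_nonneg hρ₁.le, habs_c, div_lt_iff₀ (by positivity)]
    nlinarith
  have hcζ₀ : c * ζ₀ = c * z₁ - ((ρ₁ : ℝ) : ℂ) ^ 2 := by
    rw [hζ₀def]; field_simp
  obtain ⟨A, hAdef⟩ : ∃ A : ℂ, A = (starRingEnd ℂ) κ / c + (starRingEnd ℂ) α := ⟨_, rfl⟩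
  obtain ⟨B, hBdef⟩ : ∃ B : ℂ, B = (starRingEnd ℂ) κ * ((ρ₁ : ℝ) : ℂ) ^ 2 / c ^ 2 := ⟨_, rfl⟩
  -- first integral via the Cauchy integral formula
  have h1 : (∮ ζ in C(z₁, ρ₁), q₁ n ζ / (ζ - ξ))
      = (2 * (π : ℂ) * Complex.I) * (κ / (ξ - w) + α) := by
    have hd : DifferentiableOn ℂ (fun z => κ / (z - w) + α) (Metric.closedBall z₁ ρ₁) :=
      ((differentiableOn_const _).div
        (differentiableOn_id.sub (differentiableOn_const _)) hwout).add
        (differentiableOn_const _)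
    have hC := hd.circleIntegral_sub_inv_smul hξball
    calc (∮ ζ in C(z₁, ρ₁), q₁ n ζ / (ζ - ξ))
        = ∮ ζ in C(z₁, ρ₁), (ζ - ξ)⁻¹ • (κ / (ζ - w) + α) :=
          circleIntegral.integral_congr hρ₁.le fun ζ _ => by
            rw [hq₁' ζ]; simp [div_eq_mul_inv, mul_comm]
      _ = (2 * (π : ℂ) * Complex.I) * (κ / (ξ - w) + α) := by
          rw [hC]; simp [smul_eq_mul]
  -- second integral
  have h2 : (∮ ζ in C(z₁, ρ₁), (starRingEnd ℂ) (q₁ n ζ) / (ζ - ξ))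
      = (2 * (π : ℂ) * Complex.I) * A := by
    have heq : Set.EqOn (fun ζ => (starRingEnd ℂ) (q₁ n ζ) / (ζ - ξ))
        (fun ζ => A * (ζ - ξ)⁻¹ - B * ((ζ - ζ₀)⁻¹ * (ζ - ξ)⁻¹)) (Metric.sphere z₁ ρ₁) := by
      intro u hu
      have hu1 : ‖u - z₁‖ = ρ₁ := by
        rw [← Complex.dist_eq]; exact Metric.mem_sphere.1 hu
      have huz : u - z₁ ≠ 0 := by
        intro h; rw [h, norm_zero] at hu1; linarith
      have huw : u - w ≠ 0 := hwout u (Metric.sphere_subset_closedBall hu)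
      have huξ : u - ξ ≠ 0 := by
        intro h; rw [sub_eq_zero] at h; rw [h] at hu1
        exact absurd hu1 (ne_of_lt hξ)
      have huζ₀ : u - ζ₀ ≠ 0 := by
        intro h; rw [sub_eq_zero] at h
        have h4 : ‖ζ₀ - z₁‖ < ρ₁ := by
          rw [← Complex.dist_eq]; exact Metric.mem_ball.1 hζ₀ball
        rw [← h] at h4; rw [hu1] at h4; exact lt_irrefl _ h4
      have hmod : (starRingEnd ℂ) (u - z₁) * (u - z₁) = ((ρ₁ : ℝ) : ℂ) ^ 2 := by
        rw [mul_comm, Complex.mul_conj, Complex.normSq_eq_norm_sq, hu1]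
        push_cast
        ring
      have hkey : (starRingEnd ℂ) (u - w) * (u - z₁) = c * (u - ζ₀) := by
        have h5 : u - w = (u - z₁) + (L : ℂ) * (z₁ - z₂) := by
          have := hwz; rw [sub_eq_iff_eq_add] at this
          rw [this]; ring
        rw [h5, map_add, map_mul, Complex.conj_ofReal, ← hcdef, add_mul, hmod]
        linear_combination hcζ₀
      have hkey' : (starRingEnd ℂ) u - (starRingEnd ℂ) w = c * (u - ζ₀) / (u - z₁) := by
        rw [eq_div_iff huz, ← map_sub]; exact hkey
      have hE : (starRingEnd ℂ) κ / ((starRingEnd ℂ) u - (starRingEnd ℂ) w)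
          = A - (starRingEnd ℂ) α - B / (u - ζ₀) := by
        have hc2 : ((ρ₁ : ℝ) : ℂ) ^ 2 = c * z₁ - c * ζ₀ := by linear_combination hcζ₀
        rw [hkey', hAdef, hBdef, hc2]
        field_simp
        ring
      show (starRingEnd ℂ) (q₁ n u) / (u - ξ) = A * (u - ξ)⁻¹ - B * ((u - ζ₀)⁻¹ * (u - ξ)⁻¹)
      rw [hq₁' u, map_add, map_div₀, map_sub, hE]
      field_simp
      ring
    rw [circleIntegral.integral_congr hρ₁.le heq]
    have hsne : ∀ z ∈ Metric.sphere z₁ ρ₁, z - ξ ≠ 0 := by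
      intro z hz'' h
      rw [sub_eq_zero] at h
      have : ‖z - z₁‖ = ρ₁ := by
        rw [← Complex.dist_eq]; exact Metric.mem_sphere.1 hz''
      rw [h] at this; exact absurd this (ne_of_lt hξ)
    have hsneζ₀ : ∀ z ∈ Metric.sphere z₁ ρ₁, z - ζ₀ ≠ 0 := by
      intro z hz'' h
      rw [sub_eq_zero] at h
      have h5 : ‖z - z₁‖ = ρ₁ := by
        rw [← Complex.dist_eq]; exact Metric.mem_sphere.1 hz''
      have h4 : ‖ζ₀ - z₁‖ < ρ₁ := by
        rw [← Complex.dist_eq]; exact Metric.mem_ball.1 hζ₀ball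
      rw [← h, h5] at h4; exact lt_irrefl _ h4
    have hi1 : CircleIntegrable (fun ζ : ℂ => A * (ζ - ξ)⁻¹) z₁ ρ₁ :=
      ContinuousOn.circleIntegrable hρ₁.le
        (continuousOn_const.mul ((continuousOn_id.sub continuousOn_const).inv₀ hsne))
    have hi2 : CircleIntegrable (fun ζ : ℂ => B * ((ζ - ζ₀)⁻¹ * (ζ - ξ)⁻¹)) z₁ ρ₁ :=
      ContinuousOn.circleIntegrable hρ₁.le
        (continuousOn_const.mul
          (((continuousOn_id.sub continuousOn_const).inv₀ hsneζ₀).mul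
            ((continuousOn_id.sub continuousOn_const).inv₀ hsne)))
    rw [circleIntegral.integral_sub hi1 hi2, circleIntegral.integral_const_mul,
      circleIntegral.integral_const_mul, circleIntegral.integral_sub_inv_of_mem_ball hξball,
      aux_two_poles hζ₀ball hξball, mul_zero, sub_zero, mul_comm]
  rw [h1, h2]
  have hπ : (2 * (π : ℂ) * Complex.I) ≠ 0 := by
    simp [Real.pi_ne_zero, Complex.I_ne_zero]
  have hinv : ∀ x : ℂ, (1 / (2 * (π : ℂ) * Complex.I)) * ((2 * (π : ℂ) * Complex.I) * x) = x := by
    intro x; field_simp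
  rw [hinv, hinv]
  have hconjA : (starRingEnd ℂ) A = κ / ((L : ℂ) * (z₁ - z₂)) + α := by
    rw [hAdef, hcdef]
    simp only [map_add, map_div₀, map_mul, Complex.conj_conj, Complex.conj_ofReal]
  have hα' : α = -κ / (2 * (L : ℂ) * (z₁ - z₂)) := by
    rw [hαdef, hα₁ n hn, ← hLdef, ← hκdef]
  have hκL : κ / ((L : ℂ) * (z₁ - z₂)) = -2 * α := by
    rw [hα']; field_simp
  rw [hconjA, hκL]
  ring
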